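/- For every real x and every n >= 1, the Pell-type identity |Q_n(x)|^2 - (x^2 - 1) R_{n-1}(x)^2 = 1 holds, where Q_n is the complex polynomial Q_n(z) = (1/sqrt(a^2+1)) ( -(az+i) T_{n-1}(z) + sqrt(a^2+1)(1-z^2) U_{n-2}(z) ) and R_{n-1}(z) = (1/sqrt(a^2+1)) ( sqrt(a^2+1) z U_{n-2}(z) + a T_{n-1}(z) ). -/

import Mathlib

open Polynomial

lemma pellU (R : Type*) [CommRing R] (n : ℤ) :
    Chebyshev.U R n ^ 2 - 2 * X * Chebyshev.U R n * Chebyshev.U R (n - 1)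
      + Chebyshev.U R (n - 1) ^ 2 = 1 := by
  induction n using Polynomial.Chebyshev.induct with
  | zero => simp [Chebyshev.U_neg_one]
  | one => simp [Chebyshev.U_one]; ring
  | add_two n h1 h2 =>
      have hrec := Chebyshev.U_add_two R (n : ℤ)
      have e1 : ((n : ℤ) + 2 - 1) = ((n : ℤ) + 1) := by ring
      have e2 : ((n : ℤ) + 1 - 1) = (n : ℤ) := by ring
      rw [e1, hrec]
      rw [e2] at h1
      linear_combination h1
  | neg_add_one n h1 h2 =>
      have hrec := Chebyshev.U_sub_two R (-(n : ℤ))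
      have e1 : (-(n : ℤ) - 1 - 1) = (-(n:ℤ) - 2) := by ring
      rw [e1, hrec]
      linear_combination h1

lemma pellT (R : Type*) [CommRing R] (n : ℤ) :
    Chebyshev.T R n ^ 2 + (1 - X ^ 2) * Chebyshev.U R (n - 1) ^ 2 = 1 := by
  have h := Chebyshev.T_eq_U_sub_X_mul_U R n
  linear_combination (Chebyshev.T R n + Chebyshev.U R n - X * Chebyshev.U R (n-1)) * h
    + pellU R n

lemma pell_eval (n : ℤ) (x : ℝ) :
    ((Chebyshev.T ℝ n).eval x) ^ 2 + (1 - x ^ 2) * ((Chebyshev.U ℝ (n - 1)).eval x) ^ 2 = 1 := by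
  have h := congrArg (Polynomial.eval x) (pellT ℝ n)
  simpa using h

/-- The Pell-type identity `|Q_n(x)|^2 - (x^2-1) R_{n-1}(x)^2 = 1` for real `x`. -/
theorem stmt2 (a : ℝ) (n : ℕ) (hn : 1 ≤ n) (x : ℝ) :
    ‖((1 / (Real.sqrt (a ^ 2 + 1) : ℂ)) *
        (-((a : ℂ) * (x : ℂ) + Complex.I) *
            (Polynomial.Chebyshev.T ℂ ((n : ℤ) - 1)).eval (x : ℂ) +
          (Real.sqrt (a ^ 2 + 1) : ℂ) * (1 - (x : ℂ) ^ 2) *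
            (Polynomial.Chebyshev.U ℂ ((n : ℤ) - 2)).eval (x : ℂ)))‖ ^ 2 -
      (x ^ 2 - 1) *
        ((1 / Real.sqrt (a ^ 2 + 1)) *
          (Real.sqrt (a ^ 2 + 1) * x * (Polynomial.Chebyshev.U ℝ ((n : ℤ) - 2)).eval x +
            a * (Polynomial.Chebyshev.T ℝ ((n : ℤ) - 1)).eval x)) ^ 2 = 1 := by
  set s : ℝ := Real.sqrt (a ^ 2 + 1) with hs_def
  have ha1 : (0:ℝ) < a ^ 2 + 1 := by positivity
  have hs2 : s ^ 2 = a ^ 2 + 1 := Real.sq_sqrt ha1.le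
  have hs0 : s ≠ 0 := by
    intro h
    rw [h] at hs2
    nlinarith
  set t : ℝ := (Chebyshev.T ℝ ((n : ℤ) - 1)).eval x with ht_def
  set u : ℝ := (Chebyshev.U ℝ ((n : ℤ) - 2)).eval x with hu_def
  have hTc : (Chebyshev.T ℂ ((n : ℤ) - 1)).eval (x : ℂ) = (t : ℂ) := by
    rw [← Chebyshev.map_T Complex.ofRealHom ((n:ℤ) - 1), ht_def, Polynomial.eval_map]
    exact Polynomial.eval₂_at_apply Complex.ofRealHom x
  have hUc : (Chebyshev.U ℂ ((n : ℤ) - 2)).eval (x : ℂ) = (u : ℂ) := by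
    rw [← Chebyshev.map_U Complex.ofRealHom ((n:ℤ) - 2), hu_def, Polynomial.eval_map]
    exact Polynomial.eval₂_at_apply Complex.ofRealHom x
  rw [hTc, hUc]
  have hz : (1 / (s : ℂ)) *
      (-((a : ℂ) * (x : ℂ) + Complex.I) * (t : ℂ) + (s : ℂ) * (1 - (x : ℂ) ^ 2) * (u : ℂ))
      = (((1/s) * (s * (1 - x^2) * u - a * x * t) : ℝ) : ℂ)
        + (((-(1/s) * t) : ℝ) : ℂ) * Complex.I := by
    push_cast
    field_simp
    ring
  rw [hz, Complex.sq_norm, Complex.normSq_add_mul_I]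
  have hpell := pell_eval ((n : ℤ) - 1) x
  have e2 : ((n : ℤ) - 1 - 1) = ((n : ℤ) - 2) := by ring
  rw [e2] at hpell
  rw [← ht_def, ← hu_def] at hpell
  have key : ((1/s) * (s * (1 - x^2) * u - a * x * t))^2 + (-(1/s) * t)^2
      - (x ^ 2 - 1) * ((1/s) * (s * x * u + a * t))^2
      = (1 / s^2) * ((a^2 + 1) * t^2 + s^2 * (1 - x^2) * u^2) := by
    field_simp
    ring
  rw [key, hs2]
  field_simp
  linear_combination hpell
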